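/- Let X and H be real Hilbert spaces and let ι : X → H be a continuous linear map. Let M ∈ ℕ, let e_1, …, e_M ∈ X and μ_1, …, μ_M ∈ ℝ be such that ⟨ι e_i, ι e_j⟩_H = δ_{ij} and ⟨e_i, v⟩_X = μ_i ⟨ι e_i, ι v⟩_H for all v ∈ X and all i,j = 1,…,M. Define P : H → H by P h = Σ_{i=1}^M ⟨h, ι e_i⟩_H ι e_i and f : X → ℝ by f(u) = (1/2)‖u‖_X² − ‖ι u − P(ι u)‖_H. Then for every u ∈ X, setting w = u − Σ_{i=1}^M ⟨ι u, ι e_i⟩_H e_i, one has f(u) ≥ f(w). -/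

import Mathlib

open scoped RealInnerProductSpace

/-- Let `e_1, …, e_M ∈ X` be eigenvectors of the variational problem
`⟪u, v⟫_X = μ ⟪ι u, ι v⟫_H` (with eigenvalues `μ_i`) whose images `ι e_i` are
orthonormal in `H`. With `P h = Σ_i ⟪h, ι e_i⟫ ι e_i` and
`f(u) = (1/2)‖u‖² − ‖ι u − P(ι u)‖`, for every `u ∈ X` and
`w = u − Σ_i ⟪ι u, ι e_i⟫ e_i` one has `f(u) ≥ f(w)`. -/
theorem stmt_14 {X H : Type*}
    [NormedAddCommGroup X] [InnerProductSpace ℝ X] [CompleteSpace X]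
    [NormedAddCommGroup H] [InnerProductSpace ℝ H] [CompleteSpace H]
    (ι : X →L[ℝ] H) (M : ℕ) (e : Fin M → X) (μ : Fin M → ℝ)
    (horth : ∀ i j : Fin M, ⟪ι (e i), ι (e j)⟫ = if i = j then (1 : ℝ) else 0)
    (heig : ∀ (i : Fin M) (v : X), ⟪e i, v⟫ = μ i * ⟪ι (e i), ι v⟫)
    (P : H → H) (hP : ∀ h : H, P h = ∑ i : Fin M, ⟪h, ι (e i)⟫ • ι (e i))
    (f : X → ℝ) (hf : ∀ u : X, f u = (1 / 2) * ‖u‖ ^ 2 - ‖ι u - P (ι u)‖)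
    (u : X) (w : X) (hw : w = u - ∑ i : Fin M, ⟪ι u, ι (e i)⟫ • e i) :
    f w ≤ f u := by
  -- ι w = ι u - P (ι u)
  have hιw : ι w = ι u - P (ι u) := by
    rw [hw, hP]
    simp [map_sum]
  -- ⟪ι w, ι e j⟫ = 0
  have hwe : ∀ j : Fin M, ⟪ι w, ι (e j)⟫ = 0 := by
    intro j
    rw [hιw, hP, inner_sub_left, sub_eq_zero, sum_inner]
    rw [Finset.sum_eq_single j]
    · rw [real_inner_smul_left, horth j j]; simp
    · intro i _ hij
      simp [real_inner_smul_left, horth i j, hij]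
    · simp
  -- P (ι w) = 0
  have hPw : P (ι w) = 0 := by
    rw [hP]
    simp [hwe]
  -- the norm terms are equal
  have hterm : ι w - P (ι w) = ι u - P (ι u) := by rw [hPw, hιw]; simp
  -- ⟪e i, w⟫ = 0
  have hew : ∀ i : Fin M, ⟪e i, w⟫ = 0 := by
    intro i
    rw [heig i w, real_inner_comm, hwe i, mul_zero]
  -- ⟪w, u⟫ = ‖w‖²
  have hwu : ⟪w, u⟫ = ‖w‖ ^ 2 := by
    have : ⟪w, u - w⟫ = 0 := by
      rw [show u - w = ∑ i : Fin M, ⟪ι u, ι (e i)⟫ • e i by rw [hw]; abel]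
      rw [inner_sum]
      refine Finset.sum_eq_zero fun i _ => ?_
      rw [real_inner_smul_right, real_inner_comm (e i) w] at *; rw [hew i, mul_zero]
    have h2 : ⟪w, u⟫ = ⟪w, w⟫ := by
      rw [inner_sub_right] at this; linarith
    rw [h2, real_inner_self_eq_norm_sq]
  have hnorm : ‖w‖ ≤ ‖u‖ := by
    by_cases hw0 : ‖w‖ = 0
    · rw [hw0]; exact norm_nonneg u
    · have := real_inner_le_norm w u
      rw [hwu] at this
      nlinarith [norm_nonneg w, norm_nonneg u, lt_of_le_of_ne (norm_nonneg w) (Ne.symm hw0)]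
  rw [hf, hf, hterm]
  have : ‖w‖ ^ 2 ≤ ‖u‖ ^ 2 := by nlinarith [norm_nonneg w]
  linarith
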